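/- Let Δ ∈ (0,1), γ > 1, q₀ = 1/Δ, and ν₀(q) = ‖x^{-Δ}|log x|^γ‖_{L^q((0,1))}. Then the 'power' of ν₀, defined as limsup_{q→q₀⁻} |log ν₀(q)| / |log(q₀ - q)|, equals γ + Δ. -/

import Mathlib

set_option maxHeartbeats 1000000


open MeasureTheory Real Set Filter

lemma exp_neg_image : (fun t : ℝ => Real.exp (-t)) '' Ioi 0 = Ioo (0:ℝ) 1 := by
  ext x
  constructor
  · rintro ⟨t, ht, rfl⟩
    exact ⟨Real.exp_pos _, Real.exp_lt_one_iff.mpr (by simpa using ht)⟩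
  · rintro ⟨hx0, hx1⟩
    exact ⟨-Real.log x, by simpa using Real.log_neg hx0 hx1, by simp [Real.exp_log hx0]⟩

lemma integral_val (Δ γ q : ℝ) (hΔ : 0 < Δ) (hγ : 0 < γ) (hq0 : 0 < q) (hq : q < 1/Δ) :
    ∫ x in Ioo (0:ℝ) 1, (x ^ (-Δ) * (-Real.log x) ^ γ) ^ q
      = (1 / (1 - Δ * q)) ^ (γ * q + 1) * Real.Gamma (γ * q + 1) := by
  have hr : 0 < 1 - Δ * q := by
    have := (lt_div_iff₀ hΔ).mp hq
    nlinarith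
  rw [← exp_neg_image,
    integral_image_eq_integral_abs_deriv_smul measurableSet_Ioi
      (fun t _ => ((hasDerivAt_neg t).exp.hasDerivWithinAt))
      (fun a _ b _ h => by
        have := Real.exp_injective h; linarith [neg_injective this])]
  rw [show ∫ t in Ioi (0:ℝ), |Real.exp (-t) * -1| •
        ((Real.exp (-t)) ^ (-Δ) * (-Real.log (Real.exp (-t))) ^ γ) ^ q
      = ∫ t in Ioi (0:ℝ), t ^ ((γ * q + 1) - 1) * Real.exp (-((1 - Δ * q) * t)) from ?_,
    integral_rpow_mul_exp_neg_mul_Ioi (by positivity) hr]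
  refine setIntegral_congr_fun measurableSet_Ioi fun t ht => ?_
  have ht0 : (0:ℝ) < t := ht
  have h1 : (Real.exp (-t)) ^ (-Δ) = Real.exp (Δ * t) := by
    rw [Real.rpow_def_of_pos (Real.exp_pos _), Real.log_exp]; ring_nf
  rw [Real.log_exp, neg_neg, h1, Real.mul_rpow (Real.exp_pos _).le (Real.rpow_nonneg ht0.le _),
    ← Real.rpow_mul ht0.le, ← Real.exp_mul (Δ * t) q]
  have hexp : Real.exp (Δ * t * q) = Real.exp (-((1 - Δ * q) * t)) * Real.exp t := by
    rw [← Real.exp_add]; ring_nf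
  rw [hexp]
  simp only [abs_mul, abs_neg, abs_one, mul_one, Real.abs_exp, smul_eq_mul]
  rw [show γ * q + 1 - 1 = γ * q by ring]
  rw [show Real.exp (-t) * (Real.exp (-((1 - Δ * q) * t)) * Real.exp t * t ^ (γ * q))
      = (Real.exp (-t) * Real.exp t) * (t ^ (γ * q) * Real.exp (-((1 - Δ * q) * t))) by ring,
    ← Real.exp_add]
  simp

/-- For `Δ ∈ (0,1)`, `γ > 1`, `q₀ = 1/Δ` and `ν₀(q) = ‖x^{-Δ}(-log x)^γ‖_{L^q((0,1))}`,
the power `limsup_{q→q₀⁻} |log ν₀(q)| / |log(q₀-q)|` equals `γ + Δ`. -/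
theorem f0_power_of_blowup (Δ γ : ℝ) (hΔ : Δ ∈ Ioo (0:ℝ) 1) (hγ : 1 < γ) :
    limsup (fun q : ℝ =>
        |Real.log ((∫ x in Ioo (0:ℝ) 1, (x ^ (-Δ) * (-Real.log x) ^ γ) ^ q) ^ (1/q))|
          / |Real.log (1/Δ - q)|)
      (nhdsWithin (1/Δ) (Iio (1/Δ))) = γ + Δ := by
  obtain ⟨hΔ0, hΔ1⟩ := hΔ
  set q₀ : ℝ := 1/Δ with hq₀def
  have hq₀1 : 1 < q₀ := one_lt_one_div hΔ0 hΔ1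
  have hq₀0 : 0 < q₀ := by linarith
  have hΔq₀ : Δ * q₀ = 1 := by rw [hq₀def]; exact mul_one_div_cancel hΔ0.ne'
  set l := nhdsWithin q₀ (Iio q₀)
  -- the transformed function
  set A : ℝ → ℝ := fun q => (1/q) * (Real.log (Real.Gamma (γ*q+1)) - (γ*q+1) * Real.log Δ)
  set B : ℝ → ℝ := fun q => (γ*q+1)/q
  -- Tendsto of the transformed expression
  have hid : Tendsto (fun q : ℝ => q) l (nhds q₀) := tendsto_nhdsWithin_of_tendsto_nhds tendsto_id
  have hsub : Tendsto (fun q : ℝ => q₀ - q) l (nhdsWithin 0 (Ioi 0)) := by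
    rw [tendsto_nhdsWithin_iff]
    constructor
    · have := tendsto_const_nhds.sub hid (f := fun _ : ℝ => q₀)
      simpa using this
    · filter_upwards [self_mem_nhdsWithin] with q hq
      exact sub_pos.mpr (mem_Iio.mp hq)
  have hu : Tendsto (fun q : ℝ => Real.log (q₀ - q)) l atBot :=
    Real.tendsto_log_nhdsGT_zero.comp hsub
  have hGpos : 0 < Real.Gamma (γ*q₀+1) := Real.Gamma_pos_of_pos (by positivity)
  have hA : Tendsto A l (nhds (A q₀)) := by
    refine Tendsto.mono_left ?_ nhdsWithin_le_nhds
    have h1 : ContinuousAt (fun q : ℝ => γ*q+1) q₀ := by fun_prop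
    have h2 : ContinuousAt Real.Gamma (γ*q₀+1) := by
      refine (Real.differentiableAt_Gamma fun m => ?_).continuousAt
      have hm : (-(m:ℝ)) ≤ 0 := by simp
      have : (0:ℝ) < γ*q₀+1 := by positivity
      exact ne_of_gt (lt_of_le_of_lt hm this)
    have h3 : ContinuousAt Real.log (Real.Gamma (γ*q₀+1)) := Real.continuousAt_log hGpos.ne'
    have h4 : ContinuousAt (fun q : ℝ => Real.Gamma (γ*q+1)) q₀ :=
      ContinuousAt.comp (g := Real.Gamma) (f := fun q : ℝ => γ*q+1) h2 h1
    have h5 : ContinuousAt (fun q : ℝ => Real.log (Real.Gamma (γ*q+1))) q₀ :=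
      ContinuousAt.comp (g := Real.log) (f := fun q : ℝ => Real.Gamma (γ*q+1)) h3 h4
    exact ((continuousAt_const.div continuousAt_id hq₀0.ne').mul
      (h5.sub (h1.mul continuousAt_const))).tendsto
  have hB : Tendsto B l (nhds (γ + Δ)) := by
    have : ContinuousAt B q₀ := by
      exact (by fun_prop : ContinuousAt (fun q : ℝ => γ*q+1) q₀).div continuousAt_id hq₀0.ne'
    have hBval : B q₀ = γ + Δ := by
      simp only [B, hq₀def]
      field_simp
    rw [← hBval]
    exact (this.tendsto).mono_left nhdsWithin_le_nhds
  have htend : Tendsto (fun q => |A q / Real.log (q₀ - q) - B q|) l (nhds (γ + Δ)) := by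
    have hAu : Tendsto (fun q => A q / Real.log (q₀ - q)) l (nhds 0) := by
      have hinv : Tendsto (fun q : ℝ => (Real.log (q₀ - q))⁻¹) l (nhds 0) := by
        have h := (tendsto_inv_atTop_zero.comp (tendsto_neg_atBot_atTop.comp hu)).neg
        simpa [Function.comp_def, inv_neg] using h
      have := hA.mul hinv
      simpa [div_eq_mul_inv] using this
    have h := (hAu.sub hB).abs
    rw [zero_sub, abs_neg, abs_of_pos (by linarith : (0:ℝ) < γ + Δ)] at h
    exact h
  -- eventual equality
  have hev : ∀ᶠ q in l, |Real.log ((∫ x in Ioo (0:ℝ) 1,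
        (x ^ (-Δ) * (-Real.log x) ^ γ) ^ q) ^ (1/q))| / |Real.log (q₀ - q)|
      = |A q / Real.log (q₀ - q) - B q| := by
    have ev1 : ∀ᶠ q in l, q ∈ Iio q₀ := self_mem_nhdsWithin
    have ev2 : ∀ᶠ q in l, q₀ - 1 < q :=
      ((eventually_gt_nhds (by linarith : q₀ - 1 < q₀)).filter_mono nhdsWithin_le_nhds)
    filter_upwards [ev1, ev2] with q hq1 hq2
    have hqpos : 0 < q := by have : (1:ℝ) < q₀ := hq₀1; linarith [mem_Iio.mp hq1]
    have hqlt : q < q₀ := hq1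
    have hs0 : 0 < q₀ - q := sub_pos.mpr hqlt
    have hs1 : q₀ - q < 1 := by linarith
    have hlogneg : Real.log (q₀ - q) < 0 := Real.log_neg hs0 hs1
    have hr : 0 < 1 - Δ * q := by nlinarith [(lt_div_iff₀ hΔ0).mp hqlt]
    have hGq : 0 < Real.Gamma (γ*q+1) := Real.Gamma_pos_of_pos (by positivity)
    rw [integral_val Δ γ q hΔ0 (by linarith) hqpos hqlt]
    have hIpos : 0 < (1 / (1 - Δ * q)) ^ (γ * q + 1) * Real.Gamma (γ * q + 1) := by
      positivity
    rw [Real.log_rpow hIpos, Real.log_mul (by positivity) hGq.ne',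
      Real.log_rpow (by positivity), show (1:ℝ)/(1-Δ*q) = (1-Δ*q)⁻¹ from one_div _,
      Real.log_inv]
    have hfact : 1 - Δ * q = Δ * (q₀ - q) := by
      rw [mul_sub, hΔq₀]
    rw [hfact, Real.log_mul hΔ0.ne' hs0.ne']
    have hkey : (1/q) * ((γ*q+1) * -(Real.log Δ + Real.log (q₀ - q)) + Real.log (Real.Gamma (γ*q+1)))
        = A q - B q * Real.log (q₀ - q) := by
      simp only [A, B]
      field_simp
      ring
    rw [hkey, ← abs_div, sub_div, mul_div_cancel_right₀ _ hlogneg.ne]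
  calc limsup _ l = limsup (fun q => |A q / Real.log (q₀ - q) - B q|) l :=
        limsup_congr hev
    _ = γ + Δ := htend.limsup_eq
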